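/- For every integer k > 1, the group BS(k,k) = ⟨a, t ∣ t⁻¹ aᵏ t = aᵏ⟩ contains a finite index subgroup isomorphic to F_k × Z, where F_k is the free group of rank k. Consequently, BS(k,k) and BS(l,l) are commensurable for all k, l > 1. -/

import Mathlib

def AbstractlyCommensurable (G : Type*) (H : Type*) [Group G] [Group H] : Prop :=
  ∃ (A : Subgroup G) (B : Subgroup H), A.FiniteIndex ∧ B.FiniteIndex ∧ Nonempty (A ≃* B)

def BSRel (m n : ℤ) : Set (FreeGroup Bool) :=
  {(FreeGroup.of false)⁻¹ * FreeGroup.of true ^ m * FreeGroup.of false *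
    (FreeGroup.of true ^ n)⁻¹}

abbrev BS (m n : ℤ) : Type := PresentedGroup (BSRel m n)

open Subgroup Multiplicative

set_option maxHeartbeats 1000000
set_option linter.unusedSectionVars false

namespace BSC


/-- helper: element conjugating a generating set into the closure lies in the normalizer -/
lemma mem_normalizer_of_conj {G : Type*} [Group G] (S : Set G) (c : G)
    (h1 : ∀ s ∈ S, c * s * c⁻¹ ∈ closure S) (h2 : ∀ s ∈ S, c⁻¹ * s * c ∈ closure S) :
    c ∈ Subgroup.normalizer (closure S : Set G) := by
  have key : ∀ (d : G), (∀ s ∈ S, d * s * d⁻¹ ∈ closure S) →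
      ∀ h, h ∈ closure S → d * h * d⁻¹ ∈ closure S := by
    intro d hd h hh
    induction hh using closure_induction with
    | mem x hx => exact hd x hx
    | one => simpa using one_mem _
    | mul x y hx hy px py =>
        have : d * (x * y) * d⁻¹ = (d * x * d⁻¹) * (d * y * d⁻¹) := by group
        rw [this]; exact mul_mem px py
    | inv x hx px =>
        have : d * x⁻¹ * d⁻¹ = (d * x * d⁻¹)⁻¹ := by group
        rw [this]; exact inv_mem px
  rw [Subgroup.mem_normalizer_iff]
  intro h
  constructor
  · exact fun hh => key c h1 h hh
  · intro hh
    have := key c⁻¹ (by simpa using h2) _ hh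
    simpa [mul_assoc] using this

variable {J : Type*} {n : ℕ}

abbrev MM (J : Type*) (n : ℕ) := FreeGroup (Unit ⊕ (J × Fin n))

def X : MM J n := FreeGroup.of (Sum.inl ())

def Y (j : J) (s : Fin n) : MM J n := FreeGroup.of (Sum.inr (j, s))

def tfun : Unit ⊕ (J × Fin n) → MM J n := fun x =>
  match x with
  | .inl _ => X
  | .inr (j, s) =>
      if h : (s : ℕ) + 1 < n then Y j ⟨(s : ℕ) + 1, h⟩
      else X * Y j ⟨0, s.pos⟩ * X⁻¹

def gfun : Unit ⊕ (J × Fin n) → MM J n := fun x =>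
  match x with
  | .inl _ => X
  | .inr (j, s) =>
      if _ : 0 < (s : ℕ) then Y j ⟨(s : ℕ) - 1, lt_of_le_of_lt (Nat.sub_le _ _) s.2⟩
      else X⁻¹ * Y j ⟨n - 1, Nat.sub_lt s.pos Nat.one_pos⟩ * X

def tf : MM J n →* MM J n := FreeGroup.lift tfun
def tg : MM J n →* MM J n := FreeGroup.lift gfun

lemma tg_comp_tf : (tg : MM J n →* MM J n).comp tf = MonoidHom.id _ := by
  apply FreeGroup.ext_hom
  rintro (⟨⟩ | ⟨j, s⟩)
  · simp [tf, tg, tfun, gfun, X]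
  · have hsn := s.2
    simp only [MonoidHom.comp_apply, MonoidHom.id_apply, tf, tg, FreeGroup.lift_apply_of, tfun]
    by_cases h : (s : ℕ) + 1 < n
    · rw [dif_pos h]
      simp only [Y, FreeGroup.lift_apply_of, gfun, Fin.val_mk]
      rw [dif_pos (by omega)]
      congr 1
    · rw [dif_neg h]
      rw [_root_.map_mul, _root_.map_mul, _root_.map_inv]
      simp only [X, Y, FreeGroup.lift_apply_of, gfun, Fin.val_mk]
      rw [dif_neg (by omega)]
      have he : (⟨n - 1, Nat.sub_lt s.pos Nat.one_pos⟩ : Fin n) = s := by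
        apply Fin.ext; simp only [Fin.val_mk]; omega
      rw [he]
      group

lemma tf_comp_tg : (tf : MM J n →* MM J n).comp tg = MonoidHom.id _ := by
  apply FreeGroup.ext_hom
  rintro (⟨⟩ | ⟨j, s⟩)
  · simp [tf, tg, tfun, gfun, X]
  · have hsn := s.2
    simp only [MonoidHom.comp_apply, MonoidHom.id_apply, tf, tg, FreeGroup.lift_apply_of, gfun]
    by_cases h : 0 < (s : ℕ)
    · rw [dif_pos h]
      simp only [Y, FreeGroup.lift_apply_of, tfun, Fin.val_mk]
      rw [dif_pos (by omega)]
      congr 1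
      simp only [Sum.inr.injEq, Prod.mk.injEq, Fin.mk.injEq, Fin.ext_iff, Fin.val_mk, true_and]
      omega
    · rw [dif_neg h]
      rw [_root_.map_mul, _root_.map_mul, _root_.map_inv]
      simp only [X, Y, FreeGroup.lift_apply_of, tfun, Fin.val_mk]
      rw [dif_neg (by omega)]
      have he : (⟨0, s.pos⟩ : Fin n) = s := by
        apply Fin.ext; simp only [Fin.val_mk]; omega
      rw [he]
      group

def tau : MulAut (MM J n) := MonoidHom.toMulEquiv tf tg tg_comp_tf tf_comp_tg

lemma tau_of_inl : (tau : MulAut (MM J n)) X = X := by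
  simp [tau, MonoidHom.toMulEquiv, tf, X, tfun]

lemma tau_of_inr (j : J) (s : Fin n) :
    (tau : MulAut (MM J n)) (Y j s) =
      if h : (s : ℕ) + 1 < n then Y j ⟨(s : ℕ) + 1, h⟩
      else X * Y j ⟨0, s.pos⟩ * X⁻¹ := by
  simp [tau, MonoidHom.toMulEquiv, tf, Y, tfun]

lemma tau_pow_X (m : ℕ) : ((tau : MulAut (MM J n)) ^ m) X = X := by
  induction m with
  | zero => rfl
  | succ m ih => rw [pow_succ, MulAut.mul_apply, tau_of_inl, ih]

lemma tau_pow_Y (m : ℕ) (j : J) (s : Fin n) (h : (s : ℕ) + m < n) :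
    ((tau : MulAut (MM J n)) ^ m) (Y j s) = Y j ⟨(s : ℕ) + m, h⟩ := by
  induction m generalizing s with
  | zero => simp
  | succ m ih =>
    rw [pow_succ', MulAut.mul_apply, ih s (by omega), tau_of_inr,
      dif_pos (by simp only [Fin.val_mk]; omega)]
    congr 1

lemma tau_pow_n : (tau : MulAut (MM J n)) ^ n = MulAut.conj X := by
  have key : ((tau : MulAut (MM J n)) ^ n : MulAut (MM J n)).toMonoidHom
      = (MulAut.conj (X : MM J n)).toMonoidHom := by
    apply FreeGroup.ext_hom
    rintro (⟨⟩ | ⟨j, s⟩)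
    · show ((tau : MulAut (MM J n)) ^ n) X = MulAut.conj X X
      rw [tau_pow_X, MulAut.conj_apply]
      group
    · show ((tau : MulAut (MM J n)) ^ n) (Y j s) = MulAut.conj X (Y j s)
      have hsn := s.2
      have hd : n = ((s : ℕ)) + (1 + (n - 1 - (s : ℕ))) := by omega
      have hpow := congrArg (fun m => (tau : MulAut (MM J n)) ^ m) hd
      rw [MulAut.conj_apply, hpow, pow_add, MulAut.mul_apply, pow_add, MulAut.mul_apply,
        tau_pow_Y (n - 1 - (s : ℕ)) j s (by omega)]
      rw [pow_one, tau_of_inr, dif_neg (by simp only [Fin.val_mk]; omega)]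
      rw [_root_.map_mul, _root_.map_mul, _root_.map_inv, tau_pow_X,
        tau_pow_Y (s : ℕ) j ⟨0, s.pos⟩ (by simp only [Fin.val_mk]; omega)]
      congr 2
      congr 1
      simp only [Sum.inr.injEq, Prod.mk.injEq, Fin.mk.injEq, Fin.ext_iff, Fin.val_mk, true_and]
      omega
  exact MulEquiv.toMonoidHom_injective key


section
variable (J : Type*) (n : ℕ)

def agen : FreeGroup (Unit ⊕ J) := FreeGroup.of (Sum.inl ())

def bgen (j : J) : FreeGroup (Unit ⊕ J) := FreeGroup.of (Sum.inr j)

variable {J}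

def phifun : Unit ⊕ (J × Fin n) → FreeGroup (Unit ⊕ J) := fun x =>
  match x with
  | .inl _ => agen J ^ n
  | .inr (j, s) => agen J ^ (s : ℕ) * bgen J j * (agen J ^ (s : ℕ))⁻¹

def Phi : MM J n →* FreeGroup (Unit ⊕ J) := FreeGroup.lift (phifun n)

def phitau : Multiplicative ℤ →* MulAut (MM J n) := zpowersHom _ tau

abbrev PP (J : Type*) (n : ℕ) := (MM J n) ⋊[phitau (J := J) n] Multiplicative ℤ

instance : Group (PP J n) := inferInstanceAs (Group ((MM J n) ⋊[phitau (J := J) n] Multiplicative ℤ))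

def rho (hn : 0 < n) : FreeGroup (Unit ⊕ J) →* PP J n := FreeGroup.lift fun x =>
  match x with
  | .inl _ => SemidirectProduct.inr (ofAdd 1)
  | .inr j => SemidirectProduct.inl (Y j ⟨0, hn⟩)

def dd (J : Type*) : FreeGroup (Unit ⊕ J) →* Multiplicative ℤ := FreeGroup.lift fun x =>
  match x with
  | .inl _ => ofAdd 1
  | .inr _ => 1

lemma phitau_ofAdd (m : ℤ) : phitau (J := J) n (ofAdd m) = tau ^ m := by
  simp [phitau, zpowersHom_apply]

lemma phitau_mul (s : ℤ) :
    phitau (J := J) n (ofAdd ((n : ℤ) * s)) = MulAut.conj ((X : MM J n) ^ s) := by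
  rw [phitau_ofAdd, zpow_mul, zpow_natCast, tau_pow_n, ← map_zpow]

lemma star (hn : 0 < n) (v : MM J n) :
    (rho n hn) (Phi n v) =
      ⟨v * X ^ (-(dd (J × Fin n) v).toAdd), ofAdd ((n : ℤ) * (dd (J × Fin n) v).toAdd)⟩ := by
  induction v using FreeGroup.induction_on with
  | C1 =>
      apply SemidirectProduct.ext <;>
        simp [SemidirectProduct.one_left, SemidirectProduct.one_right]
  | of x =>
      have hp : (pure x : MM J n) = FreeGroup.of x := rfl
      rcases x with ⟨⟩ | ⟨j, s⟩
      · have h1 : Phi (J := J) n (FreeGroup.of (Sum.inl ())) = agen J ^ n := by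
          simp only [Phi, FreeGroup.lift_apply_of, phifun]
        have h2 : rho (J := J) n hn (agen J) = SemidirectProduct.inr (ofAdd 1) := by
          simp only [rho, agen, FreeGroup.lift_apply_of]
        have h3 : dd (J × Fin n) (FreeGroup.of (Sum.inl ())) = ofAdd 1 := by
          simp only [dd, FreeGroup.lift_apply_of]
        rw [h1, _root_.map_pow, h2, h3]
        have e2 : (SemidirectProduct.inr (ofAdd (1:ℤ)) : PP J n) ^ n
            = SemidirectProduct.inr ((ofAdd (1:ℤ)) ^ n) := (_root_.map_pow _ _ _).symm
        apply SemidirectProduct.ext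
        · rw [e2, SemidirectProduct.left_inr]
          show (1 : MM J n) = FreeGroup.of (Sum.inl ()) * X ^ (-toAdd (ofAdd 1))
          simp [X]
        · rw [e2, SemidirectProduct.right_inr]
          show (ofAdd (1:ℤ)) ^ n = ofAdd ((n:ℤ) * toAdd (ofAdd (1:ℤ)))
          rw [toAdd_ofAdd, mul_one, ← ofAdd_nsmul, nsmul_eq_mul, mul_one]
      · have h1 : Phi (J := J) n (FreeGroup.of (Sum.inr (j, s))) =
            agen J ^ (s : ℕ) * bgen J j * (agen J ^ (s : ℕ))⁻¹ := by
          simp only [Phi, FreeGroup.lift_apply_of, phifun]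
        have h2 : rho (J := J) n hn (agen J) = SemidirectProduct.inr (ofAdd 1) := by
          simp only [rho, agen, FreeGroup.lift_apply_of]
        have h3 : rho (J := J) n hn (bgen J j) = SemidirectProduct.inl (Y j ⟨0, hn⟩) := by
          simp only [rho, bgen, FreeGroup.lift_apply_of]
        have h4 : dd (J × Fin n) (FreeGroup.of (Sum.inr (j, s))) = 1 := by
          simp only [dd, FreeGroup.lift_apply_of]
        rw [h1, _root_.map_mul, _root_.map_mul, _root_.map_inv, _root_.map_pow, h2, h3, h4]
        have e2 : (SemidirectProduct.inr (ofAdd (1:ℤ)) : PP J n) ^ (s : ℕ)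
            = SemidirectProduct.inr ((ofAdd (1:ℤ)) ^ (s : ℕ)) := (_root_.map_pow _ _ _).symm
        have e3 : (SemidirectProduct.inr ((ofAdd (1:ℤ)) ^ (s:ℕ)) : PP J n)⁻¹
            = SemidirectProduct.inr (((ofAdd (1:ℤ)) ^ (s:ℕ))⁻¹) := (_root_.map_inv _ _).symm
        rw [e2, e3, ← SemidirectProduct.inl_aut]
        have h5 : phitau (J := J) n ((ofAdd (1:ℤ)) ^ (s : ℕ)) (Y j ⟨0, hn⟩) = Y j s := by
          have e1 : (ofAdd (1:ℤ)) ^ (s : ℕ) = ofAdd ((s : ℕ) : ℤ) := by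
            rw [← ofAdd_nsmul, nsmul_eq_mul, mul_one]
          rw [e1, phitau_ofAdd, zpow_natCast,
            tau_pow_Y (s : ℕ) j ⟨0, hn⟩ (by simp only [Fin.val_mk]; omega)]
          congr 1
          simp only [Sum.inr.injEq, Prod.mk.injEq, Fin.mk.injEq, Fin.ext_iff, Fin.val_mk,
            true_and, zero_add]
        rw [h5]
        apply SemidirectProduct.ext
        · show Y j s = FreeGroup.of (Sum.inr (j, s)) * (X : MM J n) ^ (-(1 : Multiplicative ℤ).toAdd)
          simp [Y]
        · show (1 : Multiplicative ℤ) = ofAdd ((n : ℤ) * (1 : Multiplicative ℤ).toAdd)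
          simp
  | inv_of x ih =>
      have hp : (pure x : MM J n) = FreeGroup.of x := rfl
      rw [_root_.map_inv, _root_.map_inv, ih]
      set u := FreeGroup.of x
      set s := (dd (J × Fin n) u).toAdd with hs
      have hd : (dd (J × Fin n) u⁻¹).toAdd = -s := by rw [_root_.map_inv, toAdd_inv]
      apply SemidirectProduct.ext
      · rw [SemidirectProduct.inv_left]
        have e1 : (ofAdd ((n:ℤ) * s))⁻¹ = ofAdd ((n:ℤ) * (-s)) := by
          rw [mul_neg, ofAdd_neg]
        show phitau (J := J) n (ofAdd ((n:ℤ) * s))⁻¹ ((u * X ^ (-s))⁻¹) =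
          u⁻¹ * X ^ (-(dd (J × Fin n) u⁻¹).toAdd)
        rw [e1, phitau_mul, MulAut.conj_apply, hd, neg_neg]
        group
      · rw [SemidirectProduct.inv_right]
        show (ofAdd ((n:ℤ) * s))⁻¹ = ofAdd ((n:ℤ) * (dd (J × Fin n) u⁻¹).toAdd)
        rw [hd]
        simp [mul_neg]
  | mul x y ihx ihy =>
      rw [_root_.map_mul, _root_.map_mul, ihx, ihy]
      set s := (dd (J × Fin n) x).toAdd
      set t := (dd (J × Fin n) y).toAdd
      have hd : (dd (J × Fin n) (x * y)).toAdd = s + t := by rw [_root_.map_mul, toAdd_mul]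
      apply SemidirectProduct.ext
      · rw [SemidirectProduct.mul_left]
        show (x * X ^ (-s)) * phitau (J := J) n (ofAdd ((n:ℤ) * s)) (y * X ^ (-t)) =
          (x * y) * X ^ (-(dd (J × Fin n) (x*y)).toAdd)
        rw [hd, phitau_mul, MulAut.conj_apply]
        rw [neg_add, zpow_add]
        group
      · rw [SemidirectProduct.mul_right]
        show ofAdd ((n:ℤ) * s) * ofAdd ((n:ℤ) * t) = ofAdd ((n:ℤ) * (dd (J × Fin n) (x*y)).toAdd)
        rw [hd, ← ofAdd_add, mul_add]

lemma Phi_injective (hn : 0 < n) : Function.Injective (Phi (J := J) n) := by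
  rw [injective_iff_map_eq_one]
  intro v hv
  have h := star n hn v
  rw [hv, _root_.map_one] at h
  have hr := congrArg SemidirectProduct.right h
  have hl := congrArg SemidirectProduct.left h
  simp only [SemidirectProduct.one_left, SemidirectProduct.one_right] at hr hl
  have hz : (n : ℤ) * (dd (J × Fin n) v).toAdd = 0 := by
    have h2 := congrArg toAdd hr
    rw [toAdd_one, toAdd_ofAdd] at h2
    exact h2.symm
  have hzz : (dd (J × Fin n) v).toAdd = 0 := by
    rcases mul_eq_zero.mp hz with h' | h'
    · exfalso
      have : (n : ℤ) ≠ 0 := by exact_mod_cast hn.ne'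
      exact this h'
    · exact h'
  rw [hzz] at hl
  simpa using hl.symm

lemma Phi_range_eq : (Phi (J := J) n).range = closure (Set.range (phifun (J := J) n)) :=
  FreeGroup.range_lift_eq_closure

lemma conj_gen (j : J) (m : ℕ) :
    agen J * (agen J ^ m * bgen J j * (agen J ^ m)⁻¹) * (agen J)⁻¹
      = agen J ^ (m + 1) * bgen J j * (agen J ^ (m + 1))⁻¹ := by
  rw [pow_succ']
  group

lemma phifun_zero (hn : 0 < n) (j : J) :
    phifun (J := J) n (Sum.inr (j, ⟨0, hn⟩)) = bgen J j := by
  simp [phifun]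

lemma range_normal (hn : 0 < n) : ((Phi (J := J) n).range).Normal := by
  rw [Phi_range_eq]
  apply Subgroup.normalizer_eq_top_iff.mp
  rw [eq_top_iff, ← FreeGroup.closure_range_of (Unit ⊕ J)]
  apply (Subgroup.closure_le _).mpr
  rintro g ⟨x, rfl⟩
  rcases x with ⟨⟨⟩⟩ | j
  · -- agen is in the normalizer
    rw [show (FreeGroup.of (Sum.inl PUnit.unit) : FreeGroup (Unit ⊕ J)) = agen J from rfl]
    apply mem_normalizer_of_conj
    · rintro s ⟨x, rfl⟩
      rcases x with ⟨⟨⟩⟩ | ⟨j, t⟩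
      · have h1 : agen J * phifun (J := J) n (Sum.inl ()) * (agen J)⁻¹
            = phifun (J := J) n (Sum.inl ()) := by
          simp only [phifun]
          group
        rw [h1]
        exact subset_closure ⟨Sum.inl (), rfl⟩
      · by_cases h : (t : ℕ) + 1 < n
        · have h1 : agen J * phifun (J := J) n (Sum.inr (j, t)) * (agen J)⁻¹
              = phifun (J := J) n (Sum.inr (j, ⟨(t : ℕ) + 1, h⟩)) := by
            simp only [phifun, Fin.val_mk]
            exact conj_gen j (t : ℕ)
          rw [h1]
          exact subset_closure ⟨Sum.inr (j, ⟨(t : ℕ) + 1, h⟩), rfl⟩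
        · have hsn := t.2
          have ht : (t : ℕ) = n - 1 := by omega
          have hsucc : (n - 1) + 1 = n := by omega
          have h1 : agen J * phifun (J := J) n (Sum.inr (j, t)) * (agen J)⁻¹
              = phifun (J := J) n (Sum.inl ())
                * phifun (J := J) n (Sum.inr (j, ⟨0, t.pos⟩))
                * (phifun (J := J) n (Sum.inl ()))⁻¹ := by
            simp only [phifun, Fin.val_mk, ht]
            calc agen J * (agen J ^ (n-1) * bgen J j * (agen J ^ (n-1))⁻¹) * (agen J)⁻¹
                = agen J ^ ((n-1)+1) * bgen J j * (agen J ^ ((n-1)+1))⁻¹ := conj_gen j (n-1)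
              _ = agen J ^ n * (agen J ^ 0 * bgen J j * (agen J ^ 0)⁻¹) * (agen J ^ n)⁻¹ := by
                  rw [hsucc]
                  group
          rw [h1]
          exact mul_mem (mul_mem (subset_closure ⟨Sum.inl (), rfl⟩)
            (subset_closure ⟨Sum.inr (j, ⟨0, t.pos⟩), rfl⟩))
            (inv_mem (subset_closure ⟨Sum.inl (), rfl⟩))
    · rintro s ⟨x, rfl⟩
      rcases x with ⟨⟨⟩⟩ | ⟨j, t⟩
      · have h1 : (agen J)⁻¹ * phifun (J := J) n (Sum.inl ()) * agen J
            = phifun (J := J) n (Sum.inl ()) := by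
          simp only [phifun]
          group
        rw [h1]
        exact subset_closure ⟨Sum.inl (), rfl⟩
      · by_cases h : 0 < (t : ℕ)
        · have h1 : (agen J)⁻¹ * phifun (J := J) n (Sum.inr (j, t)) * agen J
              = phifun (J := J) n (Sum.inr (j, ⟨(t : ℕ) - 1,
                  lt_of_le_of_lt (Nat.sub_le _ _) t.2⟩)) := by
            simp only [phifun, Fin.val_mk]
            have h2 := conj_gen (J := J) j ((t : ℕ) - 1)
            have h3 : (t : ℕ) - 1 + 1 = (t : ℕ) := by omega
            rw [h3] at h2
            rw [← h2]
            group
          rw [h1]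
          exact subset_closure ⟨_, rfl⟩
        · have ht : (t : ℕ) = 0 := by omega
          have hsucc : (n - 1) + 1 = n := by omega
          have h1 : (agen J)⁻¹ * phifun (J := J) n (Sum.inr (j, t)) * agen J
              = (phifun (J := J) n (Sum.inl ()))⁻¹
                * phifun (J := J) n (Sum.inr (j, ⟨n - 1, Nat.sub_lt t.pos Nat.one_pos⟩))
                * phifun (J := J) n (Sum.inl ()) := by
            simp only [phifun, Fin.val_mk, ht]
            have hsplit : agen J ^ n = agen J ^ (n - 1) * agen J := by
              rw [← pow_succ, hsucc]
            rw [hsplit]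
            group
          rw [h1]
          exact mul_mem (mul_mem (inv_mem (subset_closure ⟨Sum.inl (), rfl⟩))
            (subset_closure ⟨_, rfl⟩)) (subset_closure ⟨Sum.inl (), rfl⟩)
  · -- bgen j is in the subgroup hence in the normalizer
    apply Subgroup.le_normalizer
    have h1 : FreeGroup.of (Sum.inr j) = phifun (J := J) n (Sum.inr (j, ⟨0, hn⟩)) := by
      rw [phifun_zero n hn]
      rfl
    rw [h1]
    exact subset_closure ⟨_, rfl⟩

lemma schreier (hn : 0 < n) (w : FreeGroup (Unit ⊕ J)) :
    w * (agen J) ^ (-(dd J w).toAdd) ∈ (Phi (J := J) n).range := by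
  have hN := range_normal (J := J) n hn
  induction w using FreeGroup.induction_on with
  | C1 => simpa using one_mem ((Phi (J := J) n).range)
  | of x =>
      have hp : (pure x : FreeGroup (Unit ⊕ J)) = FreeGroup.of x := rfl
      rcases x with ⟨⟨⟩⟩ | j
      · have h1 : dd J (FreeGroup.of (Sum.inl ())) = ofAdd 1 := by
          simp [dd, FreeGroup.lift_apply_of]
        rw [h1]
        have h2 : FreeGroup.of (Sum.inl ()) * agen J ^ (-(ofAdd (1:ℤ)).toAdd) = 1 := by
          simp [agen]
        rw [h2]
        exact one_mem ((Phi (J := J) n).range)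
      · have h1 : dd J (FreeGroup.of (Sum.inr j)) = 1 := by
          simp [dd, FreeGroup.lift_apply_of]
        rw [h1]
        have h2 : FreeGroup.of (Sum.inr j) * agen J ^ (-(1 : Multiplicative ℤ).toAdd)
            = bgen J j := by simp [bgen]
        rw [h2]
        refine MonoidHom.mem_range.mpr ⟨Y j ⟨0, hn⟩, ?_⟩
        show FreeGroup.lift (phifun n) (FreeGroup.of (Sum.inr (j, ⟨0, hn⟩))) = bgen J j
        rw [FreeGroup.lift_apply_of, phifun_zero n hn]
  | inv_of x ih =>
      have hp : (pure x : FreeGroup (Unit ⊕ J)) = FreeGroup.of x := rfl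
      set u := FreeGroup.of x
      set s := (dd J u).toAdd with hs
      have hd : (dd J u⁻¹).toAdd = -s := by rw [_root_.map_inv, toAdd_inv]
      rw [hd, neg_neg]
      have key : u⁻¹ * agen J ^ s
          = (agen J ^ s)⁻¹ * (u * agen J ^ (-s))⁻¹ * ((agen J ^ s)⁻¹)⁻¹ := by
        group
      rw [key]
      exact hN.conj_mem _ (inv_mem ih) _
  | mul x y ihx ihy =>
      set s := (dd J x).toAdd
      set t := (dd J y).toAdd
      have hd : (dd J (x * y)).toAdd = s + t := by rw [_root_.map_mul, toAdd_mul]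
      rw [hd]
      have key : x * y * agen J ^ (-(s + t))
          = (x * agen J ^ (-s)) * (agen J ^ s * (y * agen J ^ (-t)) * (agen J ^ s)⁻¹) := by
        group
      rw [key]
      exact mul_mem ihx (hN.conj_mem _ ihy _)

theorem exists_finiteIndex_subgroup (J : Type*) (n : ℕ) (hn : 0 < n) :
    ∃ A : Subgroup (FreeGroup (Unit ⊕ J)), A.FiniteIndex ∧
      Nonempty (A ≃* FreeGroup (Unit ⊕ (J × Fin n))) := by
  refine ⟨(Phi (J := J) n).range, ?_, ⟨(MonoidHom.ofInjective (Phi_injective n hn)).symm⟩⟩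
  haveI : NeZero n := ⟨hn.ne'⟩
  set c : Multiplicative ℤ →* Multiplicative (ZMod n) :=
    AddMonoidHom.toMultiplicative (Int.castAddHom (ZMod n)) with hc
  have hker : (c.comp (dd J)).ker ≤ (Phi (J := J) n).range := by
    intro w hw
    rw [MonoidHom.mem_ker, MonoidHom.comp_apply] at hw
    have h0 : (((dd J w).toAdd : ℤ) : ZMod n) = 0 := by
      have h2 := congrArg toAdd hw
      simpa [hc, AddMonoidHom.toMultiplicative] using h2
    obtain ⟨q, hq⟩ := (ZMod.intCast_zmod_eq_zero_iff_dvd _ _).mp h0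
    have hw2 : w = (w * (agen J) ^ (-(dd J w).toAdd)) * ((agen J ^ n : FreeGroup (Unit ⊕ J)) ^ q) := by
      have h3 : ((agen J ^ n : FreeGroup (Unit ⊕ J)) ^ q) = agen J ^ ((dd J w).toAdd) := by
        rw [← zpow_natCast (agen J) n, ← zpow_mul, ← hq]
      rw [h3]
      group
    rw [hw2]
    refine mul_mem (schreier n hn w) (zpow_mem (MonoidHom.mem_range.mpr ⟨X, ?_⟩) q)
    show FreeGroup.lift (phifun n) (FreeGroup.of (Sum.inl ())) = agen J ^ n
    rw [FreeGroup.lift_apply_of]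
    rfl
  haveI : Finite (Multiplicative (ZMod n)) := Finite.of_equiv _ Multiplicative.ofAdd
  haveI : (c.comp (dd J)).ker.FiniteIndex := Subgroup.finiteIndex_ker _
  exact Subgroup.finiteIndex_of_le hker

end

/-! ### Part B: structure of BS(k,k) -/

section BSpart

variable (k : ℕ) [NeZero k]
open Fin.NatCast Fin.CommRing

def rotk : Equiv.Perm (Fin k) := Equiv.addRight 1

def sigmak : MulAut (FreeGroup (Fin k)) := FreeGroup.freeGroupCongr (rotk k)

lemma sigmak_of (j : Fin k) : sigmak k (FreeGroup.of j) = FreeGroup.of (j + 1) := by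
  simp [sigmak, rotk, FreeGroup.freeGroupCongr_apply, FreeGroup.map.of]

lemma sigmak_pow_of (m : ℕ) (j : Fin k) :
    ((sigmak k) ^ m) (FreeGroup.of j) = FreeGroup.of (j + (m : Fin k)) := by
  induction m with
  | zero => simp
  | succ m ih =>
      rw [pow_succ', MulAut.mul_apply, ih, sigmak_of]
      congr 1
      push_cast
      ring

lemma sigmak_pow_k : (sigmak k) ^ k = 1 := by
  have key : (((sigmak k) ^ k : MulAut (FreeGroup (Fin k)))).toMonoidHom
      = ((1 : MulAut (FreeGroup (Fin k)))).toMonoidHom := by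
    apply FreeGroup.ext_hom
    intro j
    show ((sigmak k) ^ k) (FreeGroup.of j) = (1 : MulAut (FreeGroup (Fin k))) (FreeGroup.of j)
    rw [sigmak_pow_of, Fin.natCast_self, add_zero]
    rfl
  exact MulEquiv.toMonoidHom_injective key

abbrev GK := FreeGroup (Fin k) ⋊[zpowersHom _ (sigmak k)] Multiplicative ℤ

instance : Group (GK k) := inferInstanceAs (Group (FreeGroup (Fin k) ⋊[zpowersHom _ (sigmak k)] Multiplicative ℤ))

def alphaBS : BS (k : ℤ) (k : ℤ) := PresentedGroup.of true

def tauBS : BS (k : ℤ) (k : ℤ) := PresentedGroup.of false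

lemma relBS : (tauBS k)⁻¹ * (alphaBS k) ^ (k : ℕ) * tauBS k * ((alphaBS k) ^ (k : ℕ))⁻¹ = 1 := by
  have h : PresentedGroup.mk (BSRel (k : ℤ) (k : ℤ))
      ((FreeGroup.of false)⁻¹ * FreeGroup.of true ^ (k : ℤ) * FreeGroup.of false *
        (FreeGroup.of true ^ (k : ℤ))⁻¹) = 1 := by
    apply (QuotientGroup.eq_one_iff _).mpr
    exact Subgroup.subset_normalClosure rfl
  simp only [_root_.map_mul, _root_.map_inv, _root_.map_zpow] at h
  rw [zpow_natCast] at h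
  exact h

lemma alpha_tau_comm : Commute ((alphaBS k) ^ (k : ℕ)) (tauBS k) := by
  have h2 : (tauBS k)⁻¹ * (alphaBS k) ^ (k : ℕ) * tauBS k = (alphaBS k) ^ (k : ℕ) :=
    mul_inv_eq_one.mp (relBS k)
  unfold Commute SemiconjBy
  calc (alphaBS k) ^ (k : ℕ) * tauBS k
      = tauBS k * ((tauBS k)⁻¹ * (alphaBS k) ^ (k : ℕ) * tauBS k) := by group
    _ = tauBS k * (alphaBS k) ^ (k : ℕ) := by rw [h2]

lemma alpha_pow_central (g : BS (k : ℤ) (k : ℤ)) : Commute ((alphaBS k) ^ (k : ℕ)) g := by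
  have hg : g ∈ Subgroup.centralizer {(alphaBS k) ^ (k : ℕ)} := by
    apply PresentedGroup.generated_by
    intro j
    rw [Subgroup.mem_centralizer_iff]
    rintro h rfl
    cases j with
    | false => exact alpha_tau_comm k
    | true => exact (Commute.pow_self (alphaBS k) k)
  have := Subgroup.mem_centralizer_iff.mp hg _ rfl
  exact this

def phiBS : BS (k : ℤ) (k : ℤ) →* GK k :=
  PresentedGroup.toGroup (f := fun b =>
    cond b (SemidirectProduct.inr (ofAdd 1)) (SemidirectProduct.inl (FreeGroup.of (0 : Fin k))))
    (by
      rintro r rfl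
      simp only [_root_.map_mul, _root_.map_inv, _root_.map_zpow, FreeGroup.lift_apply_of]
      show (SemidirectProduct.inl (FreeGroup.of (0 : Fin k)) : GK k)⁻¹
          * (SemidirectProduct.inr (ofAdd 1) : GK k) ^ (k : ℤ)
          * SemidirectProduct.inl (FreeGroup.of (0 : Fin k))
          * ((SemidirectProduct.inr (ofAdd 1) : GK k) ^ (k : ℤ))⁻¹ = 1
      have e1 : ((SemidirectProduct.inr (ofAdd 1) : GK k) ^ (k : ℤ))
          = SemidirectProduct.inr ((ofAdd (1:ℤ)) ^ (k : ℤ)) := (_root_.map_zpow _ _ _).symm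
      have e2 : (ofAdd (1:ℤ)) ^ (k : ℤ) = ofAdd (k : ℤ) := by
        rw [← ofAdd_zsmul, smul_eq_mul, mul_one]
      have key : (SemidirectProduct.inr (ofAdd (k:ℤ)) : GK k)
            * SemidirectProduct.inl (FreeGroup.of (0 : Fin k))
            * (SemidirectProduct.inr (ofAdd (k:ℤ)) : GK k)⁻¹
          = SemidirectProduct.inl (FreeGroup.of (0 : Fin k)) := by
        have e3 : (SemidirectProduct.inr (ofAdd (k:ℤ)) : GK k)⁻¹
            = SemidirectProduct.inr ((ofAdd (k:ℤ))⁻¹) := (_root_.map_inv _ _).symm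
        rw [e3, ← SemidirectProduct.inl_aut]
        congr 1
        show ((zpowersHom _ (sigmak k)) (ofAdd (k:ℤ))) (FreeGroup.of (0 : Fin k)) = _
        rw [zpowersHom_apply, toAdd_ofAdd, zpow_natCast, sigmak_pow_k]
        rfl
      rw [e1, e2]
      have goal_eq : (SemidirectProduct.inl (FreeGroup.of (0 : Fin k)) : GK k)⁻¹
            * SemidirectProduct.inr (ofAdd (k:ℤ))
            * SemidirectProduct.inl (FreeGroup.of (0 : Fin k))
            * (SemidirectProduct.inr (ofAdd (k:ℤ)) : GK k)⁻¹
          = (SemidirectProduct.inl (FreeGroup.of (0 : Fin k)) : GK k)⁻¹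
            * (SemidirectProduct.inr (ofAdd (k:ℤ))
              * SemidirectProduct.inl (FreeGroup.of (0 : Fin k))
              * (SemidirectProduct.inr (ofAdd (k:ℤ)) : GK k)⁻¹) := by group
      rw [goal_eq, key]
      group)

def genfun (i : Fin k) : BS (k : ℤ) (k : ℤ) :=
  (alphaBS k) ^ (i : ℕ) * tauBS k * ((alphaBS k) ^ (i : ℕ))⁻¹

def PhiB : FreeGroup (Fin k) × Multiplicative ℤ →* BS (k : ℤ) (k : ℤ) :=
  MonoidHom.noncommCoprod (FreeGroup.lift (genfun k)) (zpowersHom _ ((alphaBS k) ^ (k : ℕ)))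
    (by
      intro m g
      have h := (alpha_pow_central k (FreeGroup.lift (genfun k) m)).symm
      rw [zpowersHom_apply]
      exact h.zpow_right g.toAdd)

lemma phiBS_lift : (phiBS k).comp (FreeGroup.lift (genfun k))
    = (SemidirectProduct.inl : FreeGroup (Fin k) →* GK k) := by
  apply FreeGroup.ext_hom
  intro i
  rw [MonoidHom.comp_apply, FreeGroup.lift_apply_of, genfun]
  have ha : phiBS k (alphaBS k) = SemidirectProduct.inr (ofAdd 1) := by
    unfold phiBS alphaBS
    exact PresentedGroup.toGroup.of _
  have ht : phiBS k (tauBS k) = SemidirectProduct.inl (FreeGroup.of (0 : Fin k)) := by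
    unfold phiBS tauBS
    exact PresentedGroup.toGroup.of _
  rw [_root_.map_mul, _root_.map_mul, _root_.map_inv, _root_.map_pow, ha, ht]
  have e2 : ((SemidirectProduct.inr (ofAdd (1:ℤ)) : GK k)) ^ (i : ℕ)
      = SemidirectProduct.inr ((ofAdd (1:ℤ)) ^ (i : ℕ)) := (_root_.map_pow _ _ _).symm
  have e3 : (SemidirectProduct.inr ((ofAdd (1:ℤ)) ^ (i : ℕ)) : GK k)⁻¹
      = SemidirectProduct.inr (((ofAdd (1:ℤ)) ^ (i : ℕ))⁻¹) := (_root_.map_inv _ _).symm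
  rw [e2, e3, ← SemidirectProduct.inl_aut]
  congr 1
  show ((zpowersHom _ (sigmak k)) ((ofAdd (1:ℤ)) ^ (i : ℕ))) (FreeGroup.of (0 : Fin k)) = _
  have e4 : (ofAdd (1:ℤ)) ^ (i : ℕ) = ofAdd ((i : ℕ) : ℤ) := by
    rw [← ofAdd_nsmul, nsmul_eq_mul, mul_one]
  rw [e4, zpowersHom_apply, toAdd_ofAdd, zpow_natCast, sigmak_pow_of]
  rw [zero_add, Fin.cast_val_eq_self]

lemma phiBS_PhiB (w : FreeGroup (Fin k)) (m : Multiplicative ℤ) :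
    phiBS k (PhiB k (w, m)) = ⟨w, ofAdd ((k : ℤ) * m.toAdd)⟩ := by
  rw [PhiB, MonoidHom.noncommCoprod_apply, _root_.map_mul]
  have h1 : phiBS k (FreeGroup.lift (genfun k) w) = SemidirectProduct.inl w := by
    have := congrArg (fun f => DFunLike.coe f w) (phiBS_lift k)
    simpa using this
  have h2 : phiBS k ((zpowersHom _ ((alphaBS k) ^ (k : ℕ))) m)
      = SemidirectProduct.inr (ofAdd ((k : ℤ) * m.toAdd)) := by
    rw [zpowersHom_apply, ← zpow_natCast (alphaBS k) k, ← zpow_mul, _root_.map_zpow]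
    have ha : phiBS k (alphaBS k) = SemidirectProduct.inr (ofAdd 1) := by
      unfold phiBS alphaBS
      exact PresentedGroup.toGroup.of _
    rw [ha]
    have e5 : (SemidirectProduct.inr (ofAdd (1:ℤ)) : GK k) ^ ((k : ℤ) * m.toAdd)
        = SemidirectProduct.inr ((ofAdd (1:ℤ)) ^ ((k : ℤ) * m.toAdd)) :=
      (_root_.map_zpow _ _ _).symm
    rw [e5]
    congr 1
    rw [← ofAdd_zsmul, smul_eq_mul, mul_one]
  rw [h1, h2, SemidirectProduct.mk_eq_inl_mul_inr]

lemma PhiB_injective : Function.Injective (PhiB k) := by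
  rw [injective_iff_map_eq_one]
  rintro ⟨w, m⟩ hv
  have h := phiBS_PhiB k w m
  rw [hv, _root_.map_one] at h
  have hl := congrArg SemidirectProduct.left h
  have hr := congrArg SemidirectProduct.right h
  simp only [SemidirectProduct.one_left, SemidirectProduct.one_right] at hl hr
  have hm : m.toAdd = 0 := by
    have h2 := congrArg toAdd hr
    rw [toAdd_one, toAdd_ofAdd] at h2
    have hk : (k : ℤ) ≠ 0 := by
      exact_mod_cast (Nat.pos_of_ne_zero (NeZero.ne k)).ne'
    rcases mul_eq_zero.mp h2.symm with h' | h'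
    · exact absurd h' hk
    · exact h'
  have : m = 1 := by
    have := congrArg ofAdd hm
    simpa using this
  rw [Prod.ext_iff]
  exact ⟨hl.symm, this⟩


lemma tau_mem_range : tauBS k ∈ (PhiB k).range := by
  refine MonoidHom.mem_range.mpr ⟨(FreeGroup.of (0 : Fin k), 1), ?_⟩
  rw [PhiB, MonoidHom.noncommCoprod_apply, FreeGroup.lift_apply_of, genfun]
  simp [zpowersHom_apply]

lemma alphak_mem_range : (alphaBS k) ^ (k : ℕ) ∈ (PhiB k).range := by
  refine MonoidHom.mem_range.mpr ⟨(1, ofAdd 1), ?_⟩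
  rw [PhiB, MonoidHom.noncommCoprod_apply]
  simp [zpowersHom_apply]

def SB : Set (BS (k : ℤ) (k : ℤ)) := Set.range (genfun k) ∪ {(alphaBS k) ^ (k : ℕ)}

lemma mem_SB_right : (alphaBS k) ^ (k : ℕ) ∈ SB k := Set.mem_union_right _ rfl

lemma mem_SB_left (i : Fin k) : genfun k i ∈ SB k := Set.mem_union_left _ ⟨i, rfl⟩

lemma range_eq_closureB : (PhiB k).range = closure (SB k) := by
  apply le_antisymm
  · rintro g ⟨⟨w, m⟩, rfl⟩
    rw [PhiB, MonoidHom.noncommCoprod_apply]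
    apply mul_mem
    · have h1 : FreeGroup.lift (genfun k) w ∈ (FreeGroup.lift (genfun k)).range :=
        MonoidHom.mem_range.mpr ⟨w, rfl⟩
      rw [FreeGroup.range_lift_eq_closure] at h1
      exact Subgroup.closure_mono Set.subset_union_left h1
    · rw [zpowersHom_apply]
      exact zpow_mem (subset_closure (mem_SB_right k)) _
  · apply (Subgroup.closure_le _).mpr
    rintro s (⟨i, rfl⟩ | rfl)
    · refine MonoidHom.mem_range.mpr ⟨(FreeGroup.of i, 1), ?_⟩
      rw [PhiB, MonoidHom.noncommCoprod_apply, FreeGroup.lift_apply_of]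
      simp [zpowersHom_apply]
    · exact alphak_mem_range k

lemma conj_genB (m : ℕ) :
    alphaBS k * ((alphaBS k) ^ m * tauBS k * ((alphaBS k) ^ m)⁻¹) * (alphaBS k)⁻¹
      = (alphaBS k) ^ (m + 1) * tauBS k * ((alphaBS k) ^ (m + 1))⁻¹ := by
  rw [pow_succ']
  group

lemma conj_alphak_tau :
    (alphaBS k) ^ (k : ℕ) * tauBS k * ((alphaBS k) ^ (k : ℕ))⁻¹ = tauBS k := by
  rw [alpha_tau_comm k]
  group

lemma rangeB_normal : ((PhiB k).range).Normal := by
  have hnorm : ∀ x : BS (k : ℤ) (k : ℤ), x ∈ Subgroup.normalizer (closure (SB k) : Set (BS (k : ℤ) (k : ℤ))) := by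
    intro x
    apply PresentedGroup.generated_by
    intro j
    cases j with
    | true =>
        show alphaBS k ∈ Subgroup.normalizer (closure (SB k) : Set (BS (k : ℤ) (k : ℤ)))
        apply mem_normalizer_of_conj
        · rintro s (⟨i, rfl⟩ | rfl)
          · by_cases h : (i : ℕ) + 1 < k
            · have h1 : alphaBS k * genfun k i * (alphaBS k)⁻¹ = genfun k ⟨(i : ℕ) + 1, h⟩ := by
                unfold genfun
                simp only [Fin.val_mk]
                exact conj_genB k (i : ℕ)
              rw [h1]
              exact subset_closure (mem_SB_left k _)
            · have hik := i.2
              have hi : (i : ℕ) = k - 1 := by omega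
              have hsucc : k - 1 + 1 = k := by omega
              have h1 : alphaBS k * genfun k i * (alphaBS k)⁻¹ = tauBS k := by
                unfold genfun
                rw [hi, conj_genB k (k - 1), hsucc, conj_alphak_tau]
              rw [h1]
              exact (range_eq_closureB k) ▸ (tau_mem_range k)
          · have h1 : alphaBS k * (alphaBS k) ^ (k : ℕ) * (alphaBS k)⁻¹
                = (alphaBS k) ^ (k : ℕ) := by group
            rw [h1]
            exact subset_closure (mem_SB_right k)
        · rintro s (⟨i, rfl⟩ | rfl)
          · by_cases h : 0 < (i : ℕ)
            · have h1 : (alphaBS k)⁻¹ * genfun k i * alphaBS k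
                  = genfun k ⟨(i : ℕ) - 1, lt_of_le_of_lt (Nat.sub_le _ _) i.2⟩ := by
                unfold genfun
                simp only [Fin.val_mk]
                have h2 := conj_genB k ((i : ℕ) - 1)
                have h3 : (i : ℕ) - 1 + 1 = (i : ℕ) := by omega
                rw [h3] at h2
                rw [← h2]
                group
              rw [h1]
              exact subset_closure (mem_SB_left k _)
            · have hi : (i : ℕ) = 0 := by omega
              have hg : genfun k i = tauBS k := by
                unfold genfun
                rw [hi]
                simp
              have hkpos : 0 < k := Nat.pos_of_ne_zero (NeZero.ne k)
              have hsucc : k - 1 + 1 = k := by omega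
              have h1 : (alphaBS k)⁻¹ * tauBS k * alphaBS k
                  = ((alphaBS k) ^ (k : ℕ))⁻¹
                    * genfun k ⟨k - 1, by omega⟩
                    * (alphaBS k) ^ (k : ℕ) := by
                unfold genfun
                simp only [Fin.val_mk]
                have hsplit : (alphaBS k) ^ (k : ℕ) = (alphaBS k) ^ (k - 1) * alphaBS k := by
                  rw [← pow_succ, hsucc]
                rw [hsplit]
                group
              rw [hg, h1]
              exact mul_mem (mul_mem (inv_mem (subset_closure (mem_SB_right k)))
                (subset_closure (mem_SB_left k _)))
                (subset_closure (mem_SB_right k))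
          · have h1 : (alphaBS k)⁻¹ * (alphaBS k) ^ (k : ℕ) * alphaBS k
                = (alphaBS k) ^ (k : ℕ) := by group
            rw [h1]
            exact subset_closure (mem_SB_right k)
    | false =>
        show tauBS k ∈ Subgroup.normalizer (closure (SB k) : Set (BS (k : ℤ) (k : ℤ)))
        exact Subgroup.le_normalizer ((range_eq_closureB k) ▸ (tau_mem_range k))
  rw [range_eq_closureB]
  apply Subgroup.normalizer_eq_top_iff.mp
  rw [eq_top_iff]
  exact fun g _ => hnorm g

def dBS : BS (k : ℤ) (k : ℤ) →* Multiplicative ℤ :=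
  PresentedGroup.toGroup (f := fun b => cond b (ofAdd 1) 1)
    (by
      rintro r rfl
      simp only [_root_.map_mul, _root_.map_inv, _root_.map_zpow, FreeGroup.lift_apply_of]
      show ((1 : Multiplicative ℤ))⁻¹ * (ofAdd (1:ℤ)) ^ (k : ℤ) * 1 * ((ofAdd (1:ℤ)) ^ (k : ℤ))⁻¹ = 1
      group)

lemma dBS_alpha : dBS k (alphaBS k) = ofAdd 1 := by
  unfold dBS alphaBS
  exact PresentedGroup.toGroup.of _

lemma dBS_tau : dBS k (tauBS k) = 1 := by
  unfold dBS tauBS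
  exact PresentedGroup.toGroup.of _

lemma schreierB (g : BS (k : ℤ) (k : ℤ)) :
    g * (alphaBS k) ^ (-(dBS k g).toAdd) ∈ (PhiB k).range := by
  have hN := rangeB_normal k
  induction g using PresentedGroup.induction_on with
  | _ z =>
    induction z using FreeGroup.induction_on with
    | C1 =>
        rw [_root_.map_one]
        simpa using one_mem ((PhiB k).range)
    | of x =>
        have hp : (PresentedGroup.mk (BSRel (k:ℤ) (k:ℤ)) (FreeGroup.of x)) = PresentedGroup.of x := rfl
        rw [hp]
        cases x with
        | true =>
            show alphaBS k * (alphaBS k) ^ (-(dBS k (alphaBS k)).toAdd) ∈ (PhiB k).range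
            rw [dBS_alpha, toAdd_ofAdd]
            have h2 : alphaBS k * (alphaBS k) ^ (-(1:ℤ)) = 1 := by group
            rw [h2]
            exact one_mem _
        | false =>
            show tauBS k * (alphaBS k) ^ (-(dBS k (tauBS k)).toAdd) ∈ (PhiB k).range
            rw [dBS_tau, toAdd_one, neg_zero, zpow_zero, mul_one]
            exact tau_mem_range k
    | inv_of x ih =>
        rw [_root_.map_inv]
        set u := PresentedGroup.mk (BSRel (k:ℤ) (k:ℤ)) (FreeGroup.of x)
        set s := (dBS k u).toAdd with hs
        have hd : (dBS k u⁻¹).toAdd = -s := by rw [_root_.map_inv, toAdd_inv]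
        rw [hd, neg_neg]
        have key : u⁻¹ * alphaBS k ^ s
            = (alphaBS k ^ s)⁻¹ * (u * alphaBS k ^ (-s))⁻¹ * ((alphaBS k ^ s)⁻¹)⁻¹ := by
          group
        rw [key]
        exact hN.conj_mem _ (inv_mem ih) _
    | mul x y ihx ihy =>
        rw [_root_.map_mul]
        set u := PresentedGroup.mk (BSRel (k:ℤ) (k:ℤ)) x
        set v := PresentedGroup.mk (BSRel (k:ℤ) (k:ℤ)) y
        set s := (dBS k u).toAdd
        set t := (dBS k v).toAdd
        have hd : (dBS k (u * v)).toAdd = s + t := by rw [_root_.map_mul, toAdd_mul]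
        rw [hd]
        have key : u * v * alphaBS k ^ (-(s + t))
            = (u * alphaBS k ^ (-s))
              * (alphaBS k ^ s * (v * alphaBS k ^ (-t)) * (alphaBS k ^ s)⁻¹) := by
          group
        rw [key]
        exact mul_mem ihx (hN.conj_mem _ ihy _)

lemma rangeB_finiteIndex : (PhiB k).range.FiniteIndex := by
  set c : Multiplicative ℤ →* Multiplicative (ZMod k) :=
    AddMonoidHom.toMultiplicative (Int.castAddHom (ZMod k)) with hc
  have hker : (c.comp (dBS k)).ker ≤ (PhiB k).range := by
    intro g hg
    rw [MonoidHom.mem_ker, MonoidHom.comp_apply] at hg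
    have h0 : (((dBS k g).toAdd : ℤ) : ZMod k) = 0 := by
      have h2 := congrArg toAdd hg
      simpa [hc, AddMonoidHom.toMultiplicative] using h2
    obtain ⟨q, hq⟩ := (ZMod.intCast_zmod_eq_zero_iff_dvd _ _).mp h0
    have hw2 : g = (g * (alphaBS k) ^ (-(dBS k g).toAdd))
        * (((alphaBS k) ^ (k : ℕ)) ^ q) := by
      have h3 : (((alphaBS k) ^ (k : ℕ)) ^ q) = (alphaBS k) ^ ((dBS k g).toAdd) := by
        rw [← zpow_natCast (alphaBS k) k, ← zpow_mul, ← hq]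
      rw [h3]
      group
    rw [hw2]
    exact mul_mem (schreierB k g) (zpow_mem (alphak_mem_range k) q)
  haveI : Finite (Multiplicative (ZMod k)) := Finite.of_equiv _ Multiplicative.ofAdd
  haveI : (c.comp (dBS k)).ker.FiniteIndex := Subgroup.finiteIndex_ker _
  exact Subgroup.finiteIndex_of_le hker

end BSpart


lemma map_equiv_finiteIndex {G H : Type*} [Group G] [Group H] (e : G ≃* H)
    (K : Subgroup G) (hK : K.FiniteIndex) : (K.map e.toMonoidHom).FiniteIndex := by
  constructor
  rw [Subgroup.index_map_of_injective K e.injective,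
    e.toMonoidHom.range_eq_top_of_surjective e.surjective, Subgroup.index_top, mul_one]
  exact hK.index_ne_zero

section BSpart2

variable (k : ℕ) [NeZero k]

lemma BS_subgroup (A : Subgroup (FreeGroup (Fin k))) (hA : A.FiniteIndex) :
    ∃ H : Subgroup (BS (k : ℤ) (k : ℤ)), H.FiniteIndex ∧
      Nonempty (H ≃* (A × Multiplicative ℤ)) := by
  refine ⟨(A.prod ⊤).map (PhiB k), ?_, ?_⟩
  · constructor
    rw [Subgroup.index_map_of_injective _ (PhiB_injective k)]
    have h1 : (A.prod (⊤ : Subgroup (Multiplicative ℤ))).index = A.index := by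
      rw [Subgroup.index_prod, Subgroup.index_top, mul_one]
    rw [h1]
    exact Nat.mul_ne_zero hA.index_ne_zero (rangeB_finiteIndex k).index_ne_zero
  · exact ⟨((Subgroup.equivMapOfInjective _ _ (PhiB_injective k)).symm.trans
      ((Subgroup.prodEquiv A ⊤).trans
        (MulEquiv.prodCongr (MulEquiv.refl A) Subgroup.topEquiv)))⟩

lemma BS_part1 :
    ∃ H : Subgroup (BS (k : ℤ) (k : ℤ)), H.FiniteIndex ∧
      Nonempty (H ≃* (FreeGroup (Fin k) × Multiplicative ℤ)) :=
  ⟨(PhiB k).range, rangeB_finiteIndex k, ⟨(MonoidHom.ofInjective (PhiB_injective k)).symm⟩⟩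

end BSpart2

/-- main subgroup lemma for the commensurability argument -/
lemma BS_sub_iso (k l : ℕ) (hk : 1 < k) (hl : 1 < l) :
    ∃ H : Subgroup (BS (k : ℤ) (k : ℤ)), H.FiniteIndex ∧
      Nonempty (H ≃* (FreeGroup (Unit ⊕ (Fin (k-1) × Fin (l-1))) × Multiplicative ℤ)) := by
  haveI : NeZero k := ⟨by omega⟩
  obtain ⟨A₀, hA₀, ⟨e₀⟩⟩ := exists_finiteIndex_subgroup (Fin (k-1)) (l-1) (by omega)
  have hk1 : k = 1 + (k - 1) := by omega
  let ek : Fin k ≃ (Unit ⊕ Fin (k-1)) :=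
    (finCongr hk1).trans ((finSumFinEquiv.symm).trans
      (Equiv.sumCongr finOneEquiv (Equiv.refl (Fin (k-1)))))
  let μ : FreeGroup (Fin k) ≃* FreeGroup (Unit ⊕ Fin (k-1)) := FreeGroup.freeGroupCongr ek
  let A : Subgroup (FreeGroup (Fin k)) := A₀.map μ.symm.toMonoidHom
  have hA : A.FiniteIndex := map_equiv_finiteIndex μ.symm A₀ hA₀
  have isoA : A ≃* A₀ := (Subgroup.equivMapOfInjective A₀ μ.symm.toMonoidHom μ.symm.injective).symm
  obtain ⟨H, hH, ⟨eH⟩⟩ := BS_subgroup k A hA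
  exact ⟨H, hH, ⟨eH.trans (MulEquiv.prodCongr (isoA.trans e₀) (MulEquiv.refl _))⟩⟩

theorem BS_main (k : ℕ) (hk : 1 < k) :
    (∃ H : Subgroup (BS (k : ℤ) (k : ℤ)), H.FiniteIndex ∧
      Nonempty (H ≃* (FreeGroup (Fin k) × Multiplicative ℤ))) ∧
    (∀ l : ℕ, 1 < l →
      ∃ (A : Subgroup (BS (k : ℤ) (k : ℤ))) (B : Subgroup (BS (l : ℤ) (l : ℤ))),
        A.FiniteIndex ∧ B.FiniteIndex ∧ Nonempty (A ≃* B)) := by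
  haveI : NeZero k := ⟨by omega⟩
  constructor
  · exact BS_part1 k
  · intro l hl
    obtain ⟨A, hA, ⟨eA⟩⟩ := BS_sub_iso k l hk hl
    obtain ⟨B, hB, ⟨eB⟩⟩ := BS_sub_iso l k hl hk
    refine ⟨A, B, hA, hB, ⟨?_⟩⟩
    have link : FreeGroup (Unit ⊕ (Fin (k-1) × Fin (l-1)))
        ≃* FreeGroup (Unit ⊕ (Fin (l-1) × Fin (k-1))) :=
      FreeGroup.freeGroupCongr (Equiv.sumCongr (Equiv.refl Unit) (Equiv.prodComm _ _))
    exact eA.trans ((MulEquiv.prodCongr link (MulEquiv.refl _)).trans eB.symm)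

end BSC


theorem BS_kk_commensurable (k : ℕ) (hk : 1 < k) :
    (∃ H : Subgroup (BS (k : ℤ) (k : ℤ)), H.FiniteIndex ∧
      Nonempty (H ≃* (FreeGroup (Fin k) × Multiplicative ℤ))) ∧
    (∀ l : ℕ, 1 < l →
      AbstractlyCommensurable (BS (k : ℤ) (k : ℤ)) (BS (l : ℤ) (l : ℤ))) := by
  obtain ⟨h1, h2⟩ := BSC.BS_main k hk
  exact ⟨h1, fun l hl => h2 l hl⟩
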